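/- Let r ≤ 1 be an integer coprime with 3 and let p > 3 be a prime with p ≡ -r (mod 3) and p ≥ 3 - r. Then Σ_{k=0}^{(2p-r)/3} (6k+r) · ((r/3)_k)⁶/((1)_k)⁶ · ( Σ_{j=0}^{k-1} 1/(r/3+j)⁵ + Σ_{j=1}^{k} 1/j⁵ ) ≡ 0 (mod p) in ℤ_p. -/

import Mathlib

open Finset Polynomial Nat

/-- Sum over `Icc 1 m` as a sum over `range m`. -/
private lemma icc_sum_aux {K : Type*} [AddCommMonoid K] (f : ℕ → K) (m : ℕ) :
    ∑ j ∈ Icc 1 m, f j = ∑ j ∈ range m, f (j + 1) := by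
  induction m with
  | zero => simp
  | succ m ih => rw [Finset.sum_Icc_succ_top (by omega), ih, sum_range_succ]

/-- The harmonic-type factor. -/
private def Hf {K : Type*} [Field K] (y : K) (m : ℕ) : K :=
  (∑ j ∈ Finset.range m, (y + (j : K))⁻¹ ^ 5) + ∑ j ∈ Finset.Icc 1 m, ((j : K))⁻¹ ^ 5

private lemma Hf_alt {K : Type*} [Field K] (y : K) (m : ℕ) :
    Hf y m = ∑ j ∈ range m, ((y + (j : K))⁻¹ ^ 5 + (((j + 1 : ℕ)) : K)⁻¹ ^ 5) := by
  rw [Hf, icc_sum_aux (fun j => ((j : K))⁻¹ ^ 5) m, ← Finset.sum_add_distrib]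

private lemma Hf_succ {K : Type*} [Field K] (y : K) (t : ℕ) :
    Hf y (t + 1) = Hf y t + ((y + (t : K))⁻¹ ^ 5 + (((t + 1 : ℕ)) : K)⁻¹ ^ 5) := by
  rw [Hf_alt, Hf_alt, sum_range_succ]

private lemma Hf_zero {K : Type*} [Field K] (n : ℕ) (y : K) (hy : y = -(n : K)) :
    Hf y n = 0 := by
  have odd5 : Odd 5 := ⟨2, rfl⟩
  rw [Hf, icc_sum_aux (fun j => ((j : K))⁻¹ ^ 5) n]
  have e1 : ∑ j ∈ range n, (y + (j : K))⁻¹ ^ 5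
      = ∑ j ∈ range n, -((((n - j : ℕ)) : K)⁻¹ ^ 5) := by
    refine sum_congr rfl fun j hj => ?_
    rw [mem_range] at hj
    have h1 : y + (j : K) = -(((n - j : ℕ)) : K) := by
      rw [Nat.cast_sub hj.le, hy]; ring
    rw [h1, inv_neg, odd5.neg_pow]
  have e2 : ∑ j ∈ range n, (((n - j : ℕ)) : K)⁻¹ ^ 5
      = ∑ j ∈ range n, (((j + 1 : ℕ)) : K)⁻¹ ^ 5 := by
    rw [← Finset.sum_range_reflect (fun j => (((j + 1 : ℕ)) : K)⁻¹ ^ 5) n]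
    refine sum_congr rfl fun j hj => ?_
    rw [mem_range] at hj
    rw [show n - 1 - j + 1 = n - j from by omega]
  rw [e1, Finset.sum_neg_distrib, e2]
  ring

private lemma Hf_symm {K : Type*} [Field K] (n : ℕ) (y : K) (hy : y = -(n : K)) :
    ∀ m, m ≤ n → Hf y (n - m) = Hf y m := by
  have key : ∀ m, m ≤ n → Hf y m - Hf y (n - m) = -(Hf y n) := by
    intro m
    induction m with
    | zero =>
      intro _
      have h0 : Hf y 0 = 0 := by simp [Hf]
      rw [h0, Nat.sub_zero]; ring
    | succ m ih =>
      intro hm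
      have hm' : m ≤ n := by omega
      have ih' := ih hm'
      have hs : n - m = n - (m + 1) + 1 := by omega
      have hrw : Hf y (n - m)
          = Hf y (n - (m + 1)) + ((y + ((n - (m + 1) : ℕ) : K))⁻¹ ^ 5
              + (((n - (m + 1) + 1 : ℕ)) : K)⁻¹ ^ 5) := by
        rw [hs]; exact Hf_succ y _
      have hincr : ((y + (m : K))⁻¹ ^ 5 + (((m + 1 : ℕ)) : K)⁻¹ ^ 5)
          + ((y + ((n - (m + 1) : ℕ) : K))⁻¹ ^ 5
              + (((n - (m + 1) + 1 : ℕ)) : K)⁻¹ ^ 5) = 0 := by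
        have odd5 : Odd 5 := ⟨2, rfl⟩
        have h1 : y + (m : K) = -(((n - m : ℕ)) : K) := by
          rw [Nat.cast_sub hm', hy]; ring
        have h2 : y + ((n - (m + 1) : ℕ) : K) = -((((m + 1) : ℕ)) : K) := by
          rw [Nat.cast_sub hm, hy]; push_cast; ring
        have h3 : ((n - (m + 1) + 1 : ℕ)) = ((n - m : ℕ)) := by omega
        rw [h1, h2, h3, inv_neg, odd5.neg_pow, inv_neg, odd5.neg_pow]
        ring
      rw [Hf_succ]
      linear_combination ih' + hrw + hincr
  intro m hm
  have h1 := key m hm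
  have h2 := Hf_zero n y hy
  linear_combination -h1 + h2

/-- Pochhammer evaluation at `y = -n`. -/
private lemma poch_eval {K : Type*} [Field K] (n : ℕ) (y : K) (hy : y = -(n : K)) :
    ∀ k, k ≤ n → (ascPochhammer K k).eval y = (-1) ^ k * (n.choose k : K) * (k ! : K) := by
  intro k
  induction k with
  | zero => intro _; simp
  | succ k ih =>
    intro hk
    have hk' : k ≤ n := by omega
    rw [ascPochhammer_succ_eval, ih hk']
    have h1 : y + (k : K) = -(((n - k : ℕ)) : K) := by
      rw [Nat.cast_sub hk', hy]; ring
    have h2 : n.choose (k + 1) * (k + 1)! = n.choose k * ((n - k) * k !) := by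
      rw [Nat.factorial_succ, ← mul_assoc, Nat.choose_succ_right_eq, mul_assoc]
    have h3 : ((n.choose (k + 1) : K)) * (((k + 1)! : ℕ) : K)
        = (n.choose k : K) * ((((n - k : ℕ)) : K) * ((k ! : ℕ) : K)) := by
      exact_mod_cast congrArg (Nat.cast : ℕ → K) h2
    rw [h1, pow_succ]
    linear_combination (-1 : K) ^ k * h3

private lemma poch_ratio {K : Type*} [Field K] (n : ℕ) (y : K) (hy : y = -(n : K))
    (k : ℕ) (hk : k ≤ n) (hfk : ((k ! : ℕ) : K) ≠ 0) :
    ((ascPochhammer K k).eval y) ^ 6 * (((k ! : ℕ) : K)⁻¹) ^ 6 = ((n.choose k : ℕ) : K) ^ 6 := by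
  rw [poch_eval n y hy k hk]
  have h1 : ((-1 : K) ^ k) ^ 6 = 1 := by
    rw [← pow_mul, mul_comm, pow_mul]; norm_num
  have h2 : ((k ! : ℕ) : K) * ((k ! : ℕ) : K)⁻¹ = 1 := mul_inv_cancel₀ hfk
  calc ((-1) ^ k * (n.choose k : K) * (k ! : K)) ^ 6 * (((k ! : ℕ) : K)⁻¹) ^ 6
      = ((-1 : K) ^ k) ^ 6 * ((n.choose k : ℕ) : K) ^ 6
          * (((k ! : ℕ) : K) * ((k ! : ℕ) : K)⁻¹) ^ 6 := by ring
    _ = ((n.choose k : ℕ) : K) ^ 6 := by rw [h1, h2]; ring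

/-- The full summand. -/
private noncomputable def Tf {K : Type*} [Field K] (r y : K) (k : ℕ) : K :=
  (6 * (k : K) + r) * ((ascPochhammer K k).eval y) ^ 6 *
    (((ascPochhammer K k).eval 1)⁻¹) ^ 6 * Hf y k

private lemma Tf_eq {K : Type*} [Field K] (n : ℕ) (r y : K) (hy : y = -(n : K))
    (k : ℕ) (hk : k ≤ n) (hfk : ((k ! : ℕ) : K) ≠ 0) :
    Tf r y k = (6 * (k : K) + r) * ((n.choose k : ℕ) : K) ^ 6 * Hf y k := by
  rw [Tf, ascPochhammer_eval_one]
  calc (6 * (k : K) + r) * ((ascPochhammer K k).eval y) ^ 6 * (((k ! : ℕ) : K)⁻¹) ^ 6 * Hf y k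
      = (6 * (k : K) + r) * (((ascPochhammer K k).eval y) ^ 6 * (((k ! : ℕ) : K)⁻¹) ^ 6)
          * Hf y k := by ring
    _ = (6 * (k : K) + r) * ((n.choose k : ℕ) : K) ^ 6 * Hf y k := by
          rw [poch_ratio n y hy k hk hfk]

private lemma Tf_neg {K : Type*} [Field K] (n : ℕ) (r y : K) (hy : y = -(n : K))
    (hr : r = -3 * (n : K)) (hfac : ∀ k, k ≤ n → ((k ! : ℕ) : K) ≠ 0)
    (k : ℕ) (hk : k ≤ n) : Tf r y (n - k) = -Tf r y k := by
  rw [Tf_eq n r y hy (n - k) (by omega) (hfac _ (by omega)),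
    Tf_eq n r y hy k hk (hfac _ hk), Hf_symm n y hy k hk, Nat.choose_symm hk]
  have hco : (6 * (((n - k : ℕ)) : K) + r) = -(6 * (k : K) + r) := by
    rw [Nat.cast_sub hk, hr]; ring
  rw [hco]; ring

private lemma Tf_sum {K : Type*} [Field K] (n : ℕ) (r y : K) (hy : y = -(n : K))
    (hr : r = -3 * (n : K)) (hfac : ∀ k, k ≤ n → ((k ! : ℕ) : K) ≠ 0)
    (h2 : (2 : K) ≠ 0) :
    ∑ k ∈ range (n + 1), Tf r y k = 0 := by
  have hrefl := Finset.sum_range_reflect (Tf r y) (n + 1)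
  have e : ∑ j ∈ range (n + 1), Tf r y (n + 1 - 1 - j)
      = ∑ j ∈ range (n + 1), -(Tf r y j) := by
    refine sum_congr rfl fun j hj => ?_
    rw [mem_range] at hj
    have hj' : j ≤ n := by omega
    have h : n + 1 - 1 - j = n - j := by omega
    rw [h, Tf_neg n r y hy hr hfac j hj']
  have hS : ∑ k ∈ range (n + 1), Tf r y k = -∑ k ∈ range (n + 1), Tf r y k := by
    have h := hrefl.symm.trans e
    rwa [Finset.sum_neg_distrib] at h
  have h2S : (2 : K) * ∑ k ∈ range (n + 1), Tf r y k = 0 := by linear_combination hS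
  rcases mul_eq_zero.mp h2S with h | h
  · exact absurd h h2
  · exact h

private lemma toZMod_inverse (p : ℕ) [Fact p.Prime] (a : PadicInt p) :
    PadicInt.toZMod (Ring.inverse a) = Ring.inverse (PadicInt.toZMod a) := by
  by_cases h : IsUnit a
  · obtain ⟨u, rfl⟩ := h
    rw [Ring.inverse_unit]
    rw [show (PadicInt.toZMod (u : PadicInt p))
        = ((Units.map (PadicInt.toZMod (p := p)) u : (ZMod p)ˣ) : ZMod p) from rfl,
      Ring.inverse_unit]
    exact (Units.coe_map_inv _ u).symm
  · rw [Ring.inverse_non_unit _ h]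
    have h0 : PadicInt.toZMod a = 0 := by
      rw [← RingHom.mem_ker, PadicInt.ker_toZMod]
      exact (IsLocalRing.mem_maximalIdeal _).mpr h
    rw [h0, map_zero, Ring.inverse_zero]

private lemma toZMod_poch_eval (p : ℕ) [Fact p.Prime] (z : PadicInt p) (k : ℕ) :
    PadicInt.toZMod ((ascPochhammer (PadicInt p) k).eval z)
      = (ascPochhammer (ZMod p) k).eval (PadicInt.toZMod z) := by
  rw [← Polynomial.eval₂_at_apply, ← Polynomial.eval_map, ascPochhammer_map]

/-- Lemma 2.5: Under the hypotheses of Theorem 1.1, with `n = (2p-r)/3` and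
`x = r/3 ∈ ℤ_p`,
`Σ_{k=0}^{n} (6k+r) (r/3)_k⁶/(1)_k⁶ (Σ_{j=0}^{k-1} 1/(r/3+j)⁵ + Σ_{j=1}^{k} 1/j⁵) ≡ 0 (mod p)`. -/
theorem stmt3 (p : ℕ) [Fact p.Prime] (hp3 : 3 < p)
    (r : ℤ) (hr : r ≤ 1) (hr3 : IsCoprime r 3)
    (hpr : (p : ℤ) ≡ -r [ZMOD 3]) (hpge : 3 - r ≤ (p : ℤ))
    (n : ℕ) (hn : (n : ℤ) * 3 = 2 * p - r)
    (x : PadicInt p) (hx : 3 * x = (r : PadicInt p)) :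
    (p : PadicInt p) ∣
      ∑ k ∈ Finset.range (n + 1),
        (6 * (k : PadicInt p) + (r : PadicInt p)) *
          ((ascPochhammer (PadicInt p) k).eval x) ^ 6 *
          (Ring.inverse ((ascPochhammer (PadicInt p) k).eval 1)) ^ 6 *
          ((∑ j ∈ Finset.range k, Ring.inverse (x + (j : PadicInt p)) ^ 5) +
            ∑ j ∈ Finset.Icc 1 k, Ring.inverse ((j : PadicInt p)) ^ 5) := by
  have hp : p.Prime := Fact.out
  -- `n < p`
  have hnp : n < p := by omega
  set f : PadicInt p →+* ZMod p := PadicInt.toZMod with hf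
  set y : ZMod p := f x with hy0
  -- basic facts in `ZMod p`
  have h3ne : ((3 : ℕ) : ZMod p) ≠ 0 := by
    rw [Ne, ZMod.natCast_eq_zero_iff]
    intro hdvd
    have := Nat.le_of_dvd (by norm_num) hdvd
    omega
  have hpz : ((p : ℕ) : ZMod p) = 0 := ZMod.natCast_self p
  have h3y : (3 : ZMod p) * y = (r : ZMod p) := by
    have := congrArg f hx
    rw [map_mul, map_intCast] at this
    rw [hy0]
    rw [show f (3 : PadicInt p) = (3 : ZMod p) from map_ofNat f 3] at this
    exact this
  have h3n : ((n : ZMod p)) * 3 = -(r : ZMod p) := by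
    have hint := congrArg (Int.cast : ℤ → ZMod p) hn
    push_cast at hint
    linear_combination hint + 2 * hpz
  have hrn : (r : ZMod p) = -3 * (n : ZMod p) := by linear_combination h3n
  have hy : y = -(n : ZMod p) := by
    have h3 : (3 : ZMod p) * y = (3 : ZMod p) * -(n : ZMod p) := by
      rw [h3y, hrn]; ring
    have h3' : (3 : ZMod p) ≠ 0 := by
      simpa using h3ne
    exact mul_left_cancel₀ h3' h3
  -- factorials are invertible
  have hfac : ∀ k, k ≤ n → ((k ! : ℕ) : ZMod p) ≠ 0 := by
    intro k hk
    rw [Ne, ZMod.natCast_eq_zero_iff]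
    intro hdvd
    have := (Nat.Prime.dvd_factorial hp).mp hdvd
    omega
  have h2 : (2 : ZMod p) ≠ 0 := by
    have : ((2 : ℕ) : ZMod p) ≠ 0 := by
      rw [Ne, ZMod.natCast_eq_zero_iff]
      intro hdvd
      have := Nat.le_of_dvd (by norm_num) hdvd
      omega
    simpa using this
  -- the sum in `ZMod p` vanishes
  have hmain := Tf_sum n (r : ZMod p) y hy hrn hfac h2
  -- transfer
  rw [← Ideal.mem_span_singleton, ← PadicInt.maximalIdeal_eq_span_p,
    ← PadicInt.ker_toZMod, RingHom.mem_ker]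
  have hpush : f (∑ k ∈ Finset.range (n + 1),
      (6 * (k : PadicInt p) + (r : PadicInt p)) *
        ((ascPochhammer (PadicInt p) k).eval x) ^ 6 *
        (Ring.inverse ((ascPochhammer (PadicInt p) k).eval 1)) ^ 6 *
        ((∑ j ∈ Finset.range k, Ring.inverse (x + (j : PadicInt p)) ^ 5) +
          ∑ j ∈ Finset.Icc 1 k, Ring.inverse ((j : PadicInt p)) ^ 5))
      = ∑ k ∈ range (n + 1), Tf (r : ZMod p) y k := by
    rw [map_sum]
    refine sum_congr rfl fun k _ => ?_
    rw [hf]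
    simp only [map_mul, map_add, map_pow, map_sum, map_natCast, map_intCast, map_one,
      map_ofNat, toZMod_inverse, toZMod_poch_eval, Ring.inverse_eq_inv]
    rw [Tf, Hf, hy0, hf]
  rw [hpush]
  exact hmain
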